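/- Let n ≥ 1 and let λ = (λ₁, …, λₙ) be a weakly decreasing sequence of nonnegative integers. Then the number of minimal (monotone) lattice paths contained in the Young diagram of λ from its southwestern corner (0,0) to its northeastern corner, i.e. #{(b₁, …, bₙ) ∈ ℤⁿ : b₁ ≥ b₂ ≥ … ≥ bₙ and 0 ≤ bᵢ ≤ λᵢ for all i}, equals det(M) where M is the n×n matrix with (i,j)-entry the binomial coefficient C(λⱼ + 1, j − i + 1). (This is Narayana's path-counting formula, the special case μ = ∅ of Kreweras's theorem.) -/

import Mathlib

/-- Integer binomial coefficient with the convention `C(m, k) = 0` whenever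
`k < 0` or `k > m`. -/
def intChoose (m k : ℤ) : ℤ :=
  if 0 ≤ k ∧ k ≤ m then (m.toNat.choose k.toNat : ℤ) else 0



lemma intChoose_eq (m k : ℤ) (hm : 0 ≤ m) (hk : 0 ≤ k) : intChoose m k = (m.toNat.choose k.toNat : ℤ) := by
  unfold intChoose
  split_ifs with h
  · rfl
  · have : m < k := by omega
    rw [Nat.choose_eq_zero_of_lt (by omega)]
    rfl

lemma intChoose_neg (m k : ℤ) (hk : k < 0) : intChoose m k = 0 := by
  unfold intChoose; rw [if_neg]; omega

lemma intChoose_pascal (m k : ℤ) (hm : 0 ≤ m) :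
    intChoose (m + 1) k = intChoose m k + intChoose m (k - 1) := by
  rcases lt_or_ge k 0 with hk | hk
  · rw [intChoose_neg _ _ hk, intChoose_neg _ _ hk, intChoose_neg _ _ (by omega)]; ring
  rcases eq_or_lt_of_le hk with hk0 | hk0
  · rw [intChoose_eq _ _ (by omega) hk, intChoose_eq _ _ hm hk, intChoose_neg _ _ (by omega), ← hk0]
    simp
  · rw [intChoose_eq _ _ (by omega) hk, intChoose_eq _ _ hm hk, intChoose_eq _ _ hm (by omega)]
    have h1 : (m + 1).toNat = m.toNat + 1 := by omega
    have h2 : k.toNat = (k - 1).toNat + 1 := by omega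
    rw [h1, h2, Nat.choose_succ_succ]
    push_cast
    ring

lemma neg_one_pow_double (m : ℕ) : ((-1 : ℤ)) ^ (m + m) = 1 := by
  rw [← two_mul, pow_mul]; norm_num

lemma det_last_col_single {m : ℕ} (A : Matrix (Fin (m+1)) (Fin (m+1)) ℤ)
    (h : ∀ i, A i (Fin.last m) = if i = Fin.last m then 1 else 0) :
    A.det = (A.submatrix Fin.castSucc Fin.castSucc).det := by
  rw [Matrix.det_succ_column A (Fin.last m)]
  rw [Fintype.sum_eq_single (Fin.last m)]
  · rw [h, if_pos rfl, Fin.succAbove_last, Fin.val_last, neg_one_pow_double]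
    ring
  · intro i hi
    rw [h, if_neg hi]
    ring

lemma det_step {m : ℕ} (lam : Fin (m+1) → ℕ) :
    (Matrix.det (fun i j : Fin (m+1) =>
        intChoose ((lam j : ℤ) + 1) (((j : ℕ) : ℤ) - ((i : ℕ) : ℤ) + 1)))
    = (Matrix.det (fun i j : Fin (m+1) =>
        intChoose ((lam j : ℤ)) (((j : ℕ) : ℤ) - ((i : ℕ) : ℤ) + 1)))
    + (Matrix.det (fun i j : Fin m =>
        intChoose ((lam j.castSucc : ℤ) + 1) (((j : ℕ) : ℤ) - ((i : ℕ) : ℤ) + 1))) := by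
  set M : Matrix (Fin (m+1)) (Fin (m+1)) ℤ := fun i j =>
    intChoose ((lam j : ℤ) + 1) (((j : ℕ) : ℤ) - ((i : ℕ) : ℤ) + 1) with hM
  set V : Matrix (Fin (m+1)) (Fin (m+1)) ℤ := fun i j =>
    intChoose ((lam j : ℤ)) (((j : ℕ) : ℤ) - ((i : ℕ) : ℤ) + 1) with hV
  set B : Matrix (Fin (m+1)) (Fin (m+1)) ℤ := fun i j =>
    (if i = j then 1 else 0) + (if (j : ℕ) = (i : ℕ) + 1 then 1 else 0) with hB
  have hBdet : B.det = 1 := by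
    rw [Matrix.det_of_upperTriangular]
    · rw [Finset.prod_congr rfl (fun i _ => ?_), Finset.prod_const_one]
      simp only [hB]
      simp
    · intro i j hij
      simp only [id_eq] at hij
      have hji : (j : ℕ) < (i : ℕ) := hij
      simp only [hB]
      rw [if_neg (by rw [Fin.ext_iff]; omega), if_neg (by omega)]
      norm_num
  have hBV : ∀ i j, (B * V) i j = M i j - (if i = Fin.last m ∧ j = Fin.last m then 1 else 0) := by
    intro i j
    rw [Matrix.mul_apply]
    have expand : ∀ k : Fin (m+1), B i k * V k j =
        (if i = k then V k j else 0) + (if (k : ℕ) = (i : ℕ) + 1 then V k j else 0) := by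
      intro k
      simp only [hB]
      split_ifs <;> ring
    rw [Finset.sum_congr rfl (fun k _ => expand k), Finset.sum_add_distrib,
      Finset.sum_ite_eq Finset.univ i (fun k => V k j), if_pos (Finset.mem_univ i)]
    have hpascal : M i j = V i j + intChoose (lam j : ℤ) (((j : ℕ) : ℤ) - ((i : ℕ) : ℤ)) := by
      simp only [hM, hV]
      rw [intChoose_pascal _ _ (by positivity)]
      ring_nf
    by_cases hi : (i : ℕ) < m
    · have hlast : i ≠ Fin.last m := by
        intro h; rw [h, Fin.val_last] at hi; omega
      set i' : Fin (m+1) := ⟨(i : ℕ) + 1, by omega⟩ with hi'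
      have : (∑ k : Fin (m+1), if (k : ℕ) = (i : ℕ) + 1 then V k j else 0) = V i' j := by
        rw [Finset.sum_congr rfl (fun k _ => ?_), Finset.sum_ite_eq' Finset.univ i' (fun k => V k j),
          if_pos (Finset.mem_univ i')]
        congr 1
        rw [Fin.ext_iff]
      rw [this, hpascal, if_neg (by tauto)]
      have : V i' j = intChoose (lam j : ℤ) (((j : ℕ) : ℤ) - ((i : ℕ) : ℤ)) := by
        simp only [hV, hi']
        congr 1
        push_cast
        ring
      rw [this]
      ring
    · have hlast : i = Fin.last m := by
        rw [Fin.ext_iff, Fin.val_last]; omega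
      have : (∑ k : Fin (m+1), if (k : ℕ) = (i : ℕ) + 1 then V k j else 0) = 0 := by
        apply Finset.sum_eq_zero
        intro k _
        rw [if_neg]
        subst hlast
        rw [Fin.val_last]
        omega
      rw [this, hpascal]
      subst hlast
      by_cases hj : j = Fin.last m
      · subst hj
        rw [if_pos ⟨rfl, rfl⟩]
        have : intChoose (lam (Fin.last m) : ℤ) (((Fin.last m : ℕ) : ℤ) - ((Fin.last m : ℕ) : ℤ)) = 1 := by
          rw [sub_self, intChoose_eq _ _ (by positivity) le_rfl]
          simp
        rw [this]; ring
      · rw [if_neg (by tauto)]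
        have hjm : (j : ℕ) < m := by
          have := j.isLt
          rw [Fin.ext_iff, Fin.val_last] at hj
          omega
        have : intChoose (lam j : ℤ) (((j : ℕ) : ℤ) - ((Fin.last m : ℕ) : ℤ)) = 0 := by
          apply intChoose_neg
          rw [Fin.val_last]
          omega
        rw [this]; ring
  have hMdecomp : M = (B * V).updateCol (Fin.last m)
      ((fun i => (B * V) i (Fin.last m)) + (fun i => if i = Fin.last m then 1 else 0)) := by
    ext i j
    rw [Matrix.updateCol_apply]
    by_cases hj : j = Fin.last m
    · subst hj
      rw [if_pos rfl, Pi.add_apply, hBV]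
      by_cases hi : i = Fin.last m
      · rw [if_pos ⟨hi, rfl⟩, if_pos hi]; ring
      · rw [if_neg (by tauto), if_neg hi]; ring
    · rw [if_neg hj, hBV, if_neg (by tauto)]
      ring
  rw [hMdecomp, Matrix.det_updateCol_add]
  congr 1
  · rw [Matrix.updateCol_eq_self, Matrix.det_mul, hBdet, one_mul]
  · rw [det_last_col_single _ (fun i => by rw [Matrix.updateCol_self])]
    congr 1
    ext i j
    rw [Matrix.submatrix_apply, Matrix.updateCol_apply,
      if_neg (by exact Fin.ne_last_of_lt (Fin.castSucc_lt_last j)), hBV,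
      if_neg (by exact fun h => absurd h.2 (Fin.ne_last_of_lt (Fin.castSucc_lt_last j))), sub_zero]
    simp only [hM, Fin.coe_castSucc]

lemma S_finite (n : ℕ) (lam : Fin n → ℕ) :
    {b : Fin n → ℤ | Antitone b ∧ ∀ i : Fin n, 0 ≤ b i ∧ b i ≤ (lam i : ℤ)}.Finite := by
  apply Set.Finite.subset (Set.Finite.pi (fun i : Fin n => Set.finite_Icc (0 : ℤ) (lam i)))
  intro b hb
  rw [Set.mem_pi]
  intro i _
  exact Set.mem_Icc.mpr ⟨(hb.2 i).1, (hb.2 i).2⟩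

lemma card_restrict (m : ℕ) (lam : Fin (m+1) → ℕ) :
    {b : Fin (m+1) → ℤ | (Antitone b ∧ ∀ i, 0 ≤ b i ∧ b i ≤ (lam i : ℤ)) ∧
        b (Fin.last m) = 0}.ncard =
    {c : Fin m → ℤ | Antitone c ∧ ∀ i, 0 ≤ c i ∧ c i ≤ (lam i.castSucc : ℤ)}.ncard := by
  rw [← Set.ncard_image_of_injOn (f := fun b : Fin (m+1) → ℤ => b ∘ Fin.castSucc)
    (s := {b : Fin (m+1) → ℤ | (Antitone b ∧ ∀ i, 0 ≤ b i ∧ b i ≤ (lam i : ℤ)) ∧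
        b (Fin.last m) = 0}) ?_]
  · congr 1
    ext c
    constructor
    · rintro ⟨b, ⟨⟨hba, hbb⟩, hb0⟩, rfl⟩
      refine ⟨fun i j hij => hba (Fin.castSucc_le_castSucc_iff.mpr hij), fun i => hbb i.castSucc⟩
    · intro hc
      refine ⟨Fin.snoc c 0, ⟨⟨?_, ?_⟩, Fin.snoc_last _ _⟩, funext fun i => Fin.snoc_castSucc _ _ i⟩
      · intro i j hij
        rcases Fin.eq_castSucc_or_eq_last j with ⟨j', rfl⟩ | rfl
        · rcases Fin.eq_castSucc_or_eq_last i with ⟨i', rfl⟩ | rfl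
          · simp only [Fin.snoc_castSucc]
            exact hc.1 (Fin.castSucc_le_castSucc_iff.mp hij)
          · exact absurd (lt_of_lt_of_le (Fin.castSucc_lt_last j') hij) (lt_irrefl _)
        · simp only [Fin.snoc_last]
          rcases Fin.eq_castSucc_or_eq_last i with ⟨i', rfl⟩ | rfl
          · simp only [Fin.snoc_castSucc]
            exact (hc.2 i').1
          · simp [Fin.snoc_last]
      · intro i
        rcases Fin.eq_castSucc_or_eq_last i with ⟨i', rfl⟩ | rfl
        · simp only [Fin.snoc_castSucc]
          exact hc.2 i'
        · simp only [Fin.snoc_last]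
          exact ⟨le_rfl, by positivity⟩
  · intro b hb c hc h
    funext i
    rcases Fin.eq_castSucc_or_eq_last i with ⟨i', rfl⟩ | rfl
    · exact congrFun h i'
    · rw [hb.2, hc.2]

lemma card_shift (m : ℕ) (lam : Fin (m+1) → ℕ) (hpos : ∀ i, 1 ≤ lam i) :
    {b : Fin (m+1) → ℤ | (Antitone b ∧ ∀ i, 0 ≤ b i ∧ b i ≤ (lam i : ℤ)) ∧
        1 ≤ b (Fin.last m)}.ncard =
    {b : Fin (m+1) → ℤ | Antitone b ∧ ∀ i, 0 ≤ b i ∧ b i ≤ ((lam i - 1 : ℕ) : ℤ)}.ncard := by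
  rw [← Set.ncard_image_of_injOn (f := fun b : Fin (m+1) → ℤ => fun i => b i - 1)
    (s := {b : Fin (m+1) → ℤ | (Antitone b ∧ ∀ i, 0 ≤ b i ∧ b i ≤ (lam i : ℤ)) ∧
        1 ≤ b (Fin.last m)}) ?_]
  · congr 1
    ext c
    constructor
    · rintro ⟨b, ⟨⟨hba, hbb⟩, hb1⟩, rfl⟩
      refine ⟨fun i j hij => by simpa using hba hij, ?_⟩
      intro i
      have h1 : b (Fin.last m) ≤ b i := hba (Fin.le_last i)
      have h2 := (hbb i).2
      have h3 : ((lam i - 1 : ℕ) : ℤ) = (lam i : ℤ) - 1 := by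
        have := hpos i; omega
      show 0 ≤ b i - 1 ∧ b i - 1 ≤ ((lam i - 1 : ℕ) : ℤ)
      constructor <;> omega
    · intro hc
      refine ⟨fun i => c i + 1, ⟨⟨fun i j hij => by simpa using hc.1 hij, ?_⟩, ?_⟩, ?_⟩
      · intro i
        have h1 := (hc.2 i).1
        have h2 := (hc.2 i).2
        have h3 : ((lam i - 1 : ℕ) : ℤ) = (lam i : ℤ) - 1 := by
          have := hpos i; omega
        show 0 ≤ c i + 1 ∧ c i + 1 ≤ (lam i : ℤ)
        constructor <;> omega
      · show 1 ≤ c (Fin.last m) + 1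
        have := (hc.2 (Fin.last m)).1; omega
      · funext i
        show c i + 1 - 1 = c i
        ring
  · intro b _ c _ h
    funext i
    have := congrFun h i
    simp only at this
    omega

lemma narayana_key (N : ℕ) : ∀ (n : ℕ) (lam : Fin n → ℕ), Antitone lam →
    n + ∑ i, lam i ≤ N →
    (({b : Fin n → ℤ | Antitone b ∧ ∀ i : Fin n,
        0 ≤ b i ∧ b i ≤ (lam i : ℤ)}.ncard : ℤ)) =
    Matrix.det (fun i j : Fin n =>
      intChoose ((lam j : ℤ) + 1) (((j : ℕ) : ℤ) - ((i : ℕ) : ℤ) + 1)) := by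
  induction N with
  | zero =>
    intro n lam _ hle
    have hn : n = 0 := by omega
    subst hn
    have h1 : {b : Fin 0 → ℤ | Antitone b ∧ ∀ i : Fin 0,
        0 ≤ b i ∧ b i ≤ (lam i : ℤ)} = Set.univ := by
      ext b
      simp only [Set.mem_setOf_eq, Set.mem_univ, iff_true]
      exact ⟨fun i => i.elim0, fun i => i.elim0⟩
    rw [h1, Set.ncard_univ, Nat.card_unique, Nat.cast_one]
    exact Matrix.det_isEmpty.symm
  | succ N ih =>
    intro n lam hlam hle
    match n with
    | 0 =>
      have h1 : {b : Fin 0 → ℤ | Antitone b ∧ ∀ i : Fin 0,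
          0 ≤ b i ∧ b i ≤ (lam i : ℤ)} = Set.univ := by
        ext b
        simp only [Set.mem_setOf_eq, Set.mem_univ, iff_true]
        exact ⟨fun i => i.elim0, fun i => i.elim0⟩
      rw [h1, Set.ncard_univ, Nat.card_unique, Nat.cast_one]
      exact Matrix.det_isEmpty.symm
    | m + 1 =>
      have hsum : ∑ i : Fin (m+1), lam i
          = ∑ i : Fin m, lam i.castSucc + lam (Fin.last m) := Fin.sum_univ_castSucc lam
      have hanti' : Antitone (lam ∘ Fin.castSucc) :=
        fun i j hij => hlam (Fin.castSucc_le_castSucc_iff.mpr hij)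
      by_cases h0 : lam (Fin.last m) = 0
      · -- last part is zero
        have hset : {b : Fin (m+1) → ℤ | Antitone b ∧ ∀ i, 0 ≤ b i ∧ b i ≤ (lam i : ℤ)}
            = {b : Fin (m+1) → ℤ | (Antitone b ∧ ∀ i, 0 ≤ b i ∧ b i ≤ (lam i : ℤ)) ∧
                b (Fin.last m) = 0} := by
          ext b
          simp only [Set.mem_setOf_eq]
          constructor
          · intro hb
            refine ⟨hb, ?_⟩
            have h1 := (hb.2 (Fin.last m)).1
            have h2 := (hb.2 (Fin.last m)).2
            rw [h0] at h2
            exact_mod_cast le_antisymm (by exact_mod_cast h2) h1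
          · exact fun h => h.1
        have hdet : Matrix.det (fun i j : Fin (m+1) =>
              intChoose ((lam j : ℤ) + 1) (((j : ℕ) : ℤ) - ((i : ℕ) : ℤ) + 1))
            = Matrix.det (fun i j : Fin m =>
              intChoose (((lam ∘ Fin.castSucc) j : ℤ) + 1) (((j : ℕ) : ℤ) - ((i : ℕ) : ℤ) + 1)) := by
          refine (det_last_col_single _ ?_).trans ?_; swap
          · congr 1
          · intro i
            show intChoose ((lam (Fin.last m) : ℤ) + 1)
              (((Fin.last m : ℕ) : ℤ) - ((i : ℕ) : ℤ) + 1) = _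
            rw [h0, Fin.val_last]
            by_cases hi : i = Fin.last m
            · subst hi
              rw [if_pos rfl, Fin.val_last, sub_self, zero_add,
                intChoose_eq _ _ (by norm_num) (by norm_num)]
              rfl
            · rw [if_neg hi]
              have him : (i : ℕ) < m := by
                have := i.isLt
                rw [Fin.ext_iff, Fin.val_last] at hi
                omega
              rw [intChoose_eq _ _ (by norm_num) (by push_cast; omega)]
              rw [Nat.choose_eq_zero_of_lt (by push_cast; omega)]
              rfl
        rw [hset, hdet, card_restrict]
        exact ih m (lam ∘ Fin.castSucc) hanti'
          (by simp only [Function.comp_apply]; omega)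
      · -- last part positive
        have hpos : ∀ i, 1 ≤ lam i := fun i => by
          have := hlam (Fin.le_last i); omega
        have hanti'' : Antitone (fun i => lam i - 1 : Fin (m+1) → ℕ) :=
          fun i j hij => Nat.sub_le_sub_right (hlam hij) 1
        have hsum' : ∑ i : Fin (m+1), (lam i - 1) + (m+1) = ∑ i : Fin (m+1), lam i := by
          have h1 : ∑ i : Fin (m+1), lam i = ∑ i : Fin (m+1), (lam i - 1 + 1) :=
            Finset.sum_congr rfl (fun i _ => by have := hpos i; omega)
          rw [h1, Finset.sum_add_distrib, Finset.sum_const, Finset.card_univ,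
            Fintype.card_fin, smul_eq_mul, mul_one]
        have hset : {b : Fin (m+1) → ℤ | Antitone b ∧ ∀ i, 0 ≤ b i ∧ b i ≤ (lam i : ℤ)}
            = {b : Fin (m+1) → ℤ | (Antitone b ∧ ∀ i, 0 ≤ b i ∧ b i ≤ (lam i : ℤ)) ∧
                b (Fin.last m) = 0}
            ∪ {b : Fin (m+1) → ℤ | (Antitone b ∧ ∀ i, 0 ≤ b i ∧ b i ≤ (lam i : ℤ)) ∧
                1 ≤ b (Fin.last m)} := by
          ext b
          simp only [Set.mem_setOf_eq, Set.mem_union]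
          constructor
          · intro hb
            have h1 := (hb.2 (Fin.last m)).1
            by_cases hz : b (Fin.last m) = 0
            · exact Or.inl ⟨hb, hz⟩
            · exact Or.inr ⟨hb, by omega⟩
          · rintro (h | h) <;> exact h.1
        have hdisj : Disjoint
            {b : Fin (m+1) → ℤ | (Antitone b ∧ ∀ i, 0 ≤ b i ∧ b i ≤ (lam i : ℤ)) ∧
                b (Fin.last m) = 0}
            {b : Fin (m+1) → ℤ | (Antitone b ∧ ∀ i, 0 ≤ b i ∧ b i ≤ (lam i : ℤ)) ∧
                1 ≤ b (Fin.last m)} := by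
          rw [Set.disjoint_left]
          rintro b ⟨_, h1⟩ ⟨_, h2⟩
          omega
        have hfin0 : {b : Fin (m+1) → ℤ | (Antitone b ∧ ∀ i, 0 ≤ b i ∧ b i ≤ (lam i : ℤ)) ∧
                b (Fin.last m) = 0}.Finite :=
          (S_finite (m+1) lam).subset (fun b hb => hb.1)
        have hfin1 : {b : Fin (m+1) → ℤ | (Antitone b ∧ ∀ i, 0 ≤ b i ∧ b i ≤ (lam i : ℤ)) ∧
                1 ≤ b (Fin.last m)}.Finite :=
          (S_finite (m+1) lam).subset (fun b hb => hb.1)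
        rw [hset, Set.ncard_union_eq hdisj hfin0 hfin1, card_restrict,
          card_shift _ _ hpos, det_step lam]
        have hle2 : m + ∑ i : Fin m, (lam ∘ Fin.castSucc) i ≤ N := by
          simp only [Function.comp_apply]
          omega
        have hih2 := ih m (lam ∘ Fin.castSucc) hanti' hle2
        simp only [Function.comp_apply] at hih2
        have hV : (Matrix.det (fun i j : Fin (m+1) =>
              intChoose ((lam j : ℤ)) (((j : ℕ) : ℤ) - ((i : ℕ) : ℤ) + 1)))
            = (Matrix.det (fun i j : Fin (m+1) =>
              intChoose (((lam j - 1 : ℕ) : ℤ) + 1) (((j : ℕ) : ℤ) - ((i : ℕ) : ℤ) + 1))) := by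
          congr 1
          funext i j
          have hj := hpos j
          have : ((lam j - 1 : ℕ) : ℤ) + 1 = (lam j : ℤ) := by clear hih2; omega
          rw [this]
        have hih1 : (({b : Fin (m+1) → ℤ | Antitone b ∧ ∀ i : Fin (m+1),
              0 ≤ b i ∧ b i ≤ ((lam i - 1 : ℕ) : ℤ)}.ncard : ℤ)) =
            Matrix.det (fun i j : Fin (m+1) =>
              intChoose (((lam j - 1 : ℕ) : ℤ) + 1) (((j : ℕ) : ℤ) - ((i : ℕ) : ℤ) + 1)) :=
          ih (m+1) (fun i => lam i - 1) hanti''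
            (by clear hih2 hV; show m + 1 + ∑ i : Fin (m+1), (lam i - 1) ≤ N; omega)
        rw [hV]
        push_cast
        rw [hih1, hih2]
        ring


/-- **Narayana's path-counting formula.** The number of minimal lattice paths in the
Young diagram of `λ` from its southwestern corner `(0,0)` to its northeastern corner
(counted via the sequences `b₁ ≥ … ≥ bₙ` with `0 ≤ bᵢ ≤ λᵢ`) equals
`det (C(λⱼ + 1, j − i + 1))`. -/
theorem narayana_path_counting (n : ℕ) (hn : 1 ≤ n) (lam : Fin n → ℕ)
    (hlam : Antitone lam) :
    (({b : Fin n → ℤ | Antitone b ∧ ∀ i : Fin n,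
        0 ≤ b i ∧ b i ≤ (lam i : ℤ)}.ncard : ℤ)) =
    Matrix.det (fun i j : Fin n =>
      intChoose ((lam j : ℤ) + 1) (((j : ℕ) : ℤ) - ((i : ℕ) : ℤ) + 1)) :=
  narayana_key (n + ∑ i, lam i) n lam hlam le_rfl
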